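/- Let d ≥ 2 and 1 ≤ n ≤ d/2. There exists a nonzero vector ψ ∈ C^d with exactly d − n nonzero standard-basis coordinates and exactly 2 nonzero Fourier coefficients if and only if n divides d. -/

import Mathlib

open Complex Finset
open scoped Classical

noncomputable def dftOmega (d : ℕ) : ℂ := Complex.exp (2 * Real.pi * Complex.I / d)

/-- The j-th Fourier basis vector of `ℂ^d`, with i-th entry `ω^{ij}/√d`. -/
noncomputable def fourierVec (d : ℕ) (j : Fin d) : Fin d → ℂ :=
  fun i => dftOmega d ^ ((i : ℕ) * (j : ℕ)) / Real.sqrt d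

/-- The j-th Fourier coefficient `⟨f_j, ψ⟩ = (1/√d)∑_i ω^{−ij} ψ(i)`. -/
noncomputable def dftCoeff (d : ℕ) (ψ : Fin d → ℂ) (j : Fin d) : ℂ :=
  ∑ i, (starRingEnd ℂ) (fourierVec d j i) * ψ i

/-- Number of nonzero standard-basis coordinates of ψ. -/
noncomputable def nA (d : ℕ) (ψ : Fin d → ℂ) : ℕ :=
  (Finset.univ.filter fun i => ψ i ≠ 0).card

/-- Number of nonzero Fourier coefficients of ψ. -/
noncomputable def nB (d : ℕ) (ψ : Fin d → ℂ) : ℕ :=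
  (Finset.univ.filter fun j => dftCoeff d ψ j ≠ 0).card

/-- Kirkwood-Dirac distribution `Q_{ij} = ⟨e_i,ψ⟩⟨ψ,f_j⟩⟨f_j,e_i⟩` of ψ with
respect to the standard basis and the Fourier basis. -/
noncomputable def KD (d : ℕ) (ψ : Fin d → ℂ) (i j : Fin d) : ℂ :=
  ψ i * (∑ k, (starRingEnd ℂ) (ψ k) * fourierVec d j k) * (starRingEnd ℂ) (fourierVec d j i)


lemma dftOmega_ne_zero (d : ℕ) : dftOmega d ≠ 0 := Complex.exp_ne_zero _

lemma dftOmega_pow_self (d : ℕ) (hd : 0 < d) : dftOmega d ^ d = 1 := by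
  have hd' : (d:ℂ) ≠ 0 := Nat.cast_ne_zero.mpr hd.ne'
  rw [dftOmega, ← Complex.exp_nat_mul]
  rw [show (d:ℂ) * (2 * Real.pi * Complex.I / d) = 2 * Real.pi * Complex.I by
    field_simp]
  exact Complex.exp_two_pi_mul_I

lemma dftOmega_zpow_eq_one_iff (d : ℕ) (hd : 0 < d) (M : ℤ) :
    dftOmega d ^ M = 1 ↔ (d:ℤ) ∣ M := by
  have hd' : (d:ℂ) ≠ 0 := Nat.cast_ne_zero.mpr hd.ne'
  rw [dftOmega, ← Complex.exp_int_mul, Complex.exp_eq_one_iff]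
  constructor
  · rintro ⟨k, hk⟩
    refine ⟨k, ?_⟩
    rw [mul_comm]
    have h1 : (M:ℂ) * (2 * Real.pi * Complex.I) / d = k * (2 * Real.pi * Complex.I) := by
      rw [← hk]; ring
    have h2 : (M:ℂ) * (2 * Real.pi * Complex.I) = (k * d : ℂ) * (2 * Real.pi * Complex.I) := by
      rw [div_eq_iff hd'] at h1
      linear_combination h1
    have h3 : (M:ℂ) = ((k * d : ℤ) : ℂ) := by
      push_cast
      exact mul_right_cancel₀ Complex.two_pi_I_ne_zero h2
    exact_mod_cast h3
  · rintro ⟨k, rfl⟩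
    refine ⟨k, ?_⟩
    push_cast
    field_simp

lemma dftOmega_zpow_pow_d (d : ℕ) (hd : 0 < d) (M : ℤ) :
    (dftOmega d ^ M) ^ d = 1 := by
  rw [← zpow_natCast (dftOmega d ^ M), ← zpow_mul, mul_comm, zpow_mul,
    zpow_natCast, dftOmega_pow_self d hd, one_zpow]

lemma sum_dftOmega_zpow (d : ℕ) (hd : 0 < d) (M : ℤ) :
    ∑ i : Fin d, (dftOmega d ^ M) ^ (i : ℕ) = if (d:ℤ) ∣ M then (d : ℂ) else 0 := by
  split_ifs with h
  · have h1 : dftOmega d ^ M = 1 := (dftOmega_zpow_eq_one_iff d hd M).mpr h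
    simp [h1]
  · have h1 : dftOmega d ^ M ≠ 1 := fun hc => h ((dftOmega_zpow_eq_one_iff d hd M).mp hc)
    rw [Fin.sum_univ_eq_sum_range (fun i => (dftOmega d ^ M) ^ i) d, geom_sum_eq h1,
      dftOmega_zpow_pow_d d hd M]
    simp

lemma conj_dftOmega (d : ℕ) : (starRingEnd ℂ) (dftOmega d) = (dftOmega d)⁻¹ := by
  rw [dftOmega, ← Complex.exp_conj, ← Complex.exp_neg]
  congr 1
  simp only [map_div₀, map_mul, Complex.conj_I, Complex.conj_ofReal, map_ofNat,
    Complex.conj_natCast]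
  ring

lemma int_dvd_sub_iff_nat (d a b : ℕ) (ha : a < d) (hb : b < d) :
    (d:ℤ) ∣ (a:ℤ) - b ↔ a = b := by
  constructor
  · intro h
    have h1 : d ∣ ((a:ℤ) - b).natAbs := by
      rwa [Int.natCast_dvd] at h
    have h2 : ((a:ℤ) - b).natAbs < d := by omega
    have := Nat.eq_zero_of_dvd_of_lt h1 ?_
    · omega
    · omega
  · rintro rfl; simp

lemma sqrt_d_ne_zero (d : ℕ) (hd : 0 < d) : ((Real.sqrt d : ℝ) : ℂ) ≠ 0 := by
  simp only [ne_eq, Complex.ofReal_eq_zero]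
  positivity

lemma sqrt_d_mul_self (d : ℕ) : ((Real.sqrt d : ℝ) : ℂ) * ((Real.sqrt d : ℝ) : ℂ) = (d : ℂ) := by
  rw [← Complex.ofReal_mul, Real.mul_self_sqrt (by positivity)]
  simp

lemma conj_fourierVec (d : ℕ) (j i : Fin d) :
    (starRingEnd ℂ) (fourierVec d j i) =
      (dftOmega d ^ ((i:ℕ) * (j:ℕ)))⁻¹ / Real.sqrt d := by
  rw [fourierVec, map_div₀, map_pow, conj_dftOmega, inv_pow, Complex.conj_ofReal]

lemma dft_inversion (d : ℕ) (hd : 0 < d) (ψ : Fin d → ℂ) (i : Fin d) :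
    ∑ j, dftCoeff d ψ j * fourierVec d j i = ψ i := by
  have hω := dftOmega_ne_zero d
  have hs := sqrt_d_ne_zero d hd
  have hd' : (d:ℂ) ≠ 0 := Nat.cast_ne_zero.mpr hd.ne'
  simp only [dftCoeff, Finset.sum_mul]
  rw [Finset.sum_comm]
  have key : ∀ k : Fin d, ∑ j : Fin d,
      (starRingEnd ℂ) (fourierVec d j k) * ψ k * fourierVec d j i
      = if k = i then ψ k else 0 := by
    intro k
    have hterm : ∀ j : Fin d,
        (starRingEnd ℂ) (fourierVec d j k) * ψ k * fourierVec d j i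
        = ψ k / d * (dftOmega d ^ ((i:ℤ) - (k:ℤ))) ^ (j:ℕ) := by
      intro j
      rw [conj_fourierVec, fourierVec]
      have hp : (dftOmega d ^ ((i:ℤ) - (k:ℤ))) ^ (j:ℕ)
          = dftOmega d ^ ((i:ℕ) * (j:ℕ)) * (dftOmega d ^ ((k:ℕ) * (j:ℕ)))⁻¹ := by
        rw [← zpow_natCast (dftOmega d ^ ((i:ℤ) - (k:ℤ))), ← zpow_mul, sub_mul,
          zpow_sub₀ hω, div_eq_mul_inv]
        norm_cast
      rw [hp, ← sqrt_d_mul_self d]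
      ring
    rw [Finset.sum_congr rfl (fun j _ => hterm j), ← Finset.mul_sum,
      sum_dftOmega_zpow d hd]
    by_cases h : k = i
    · subst h
      simp [div_mul_cancel₀ _ hd']
    · have h1 : ¬ ((d:ℤ) ∣ (i:ℤ) - (k:ℤ)) := by
        rw [int_dvd_sub_iff_nat d i k i.isLt k.isLt]
        exact fun hc => h (Fin.ext hc.symm)
      simp [h1, h]
  rw [Finset.sum_congr rfl (fun k _ => key k)]
  simp

lemma pow_mod_eq (d : ℕ) (ζ : ℂ) (hζ : ζ ^ d = 1) (a : ℕ) : ζ ^ (a % d) = ζ ^ a := by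
  conv_rhs => rw [← Nat.div_add_mod a d]
  rw [pow_add, pow_mul, hζ, one_pow, one_mul]

lemma fiber_card_dvd (d : ℕ) (hd : 0 < d) (ζ c : ℂ) (hζ : ζ ^ d = 1)
    (hne : (Finset.univ.filter fun i : Fin d => ζ ^ (i:ℕ) = c).Nonempty) :
    (Finset.univ.filter fun i : Fin d => ζ ^ (i:ℕ) = c).card ∣ d := by
  haveI : NeZero d := ⟨hd.ne'⟩
  have hζ0 : ζ ≠ 0 := by
    intro h
    rw [h, zero_pow hd.ne'] at hζ
    exact zero_ne_one hζ
  obtain ⟨i0, hi0⟩ := hne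
  rw [Finset.mem_filter] at hi0
  have hc : ζ ^ ((i0:Fin d):ℕ) = c := hi0.2
  have hc0 : c ≠ 0 := hc ▸ pow_ne_zero _ hζ0
  set K : AddSubgroup (Fin d) :=
    { carrier := {x : Fin d | ζ ^ (x:ℕ) = 1}
      zero_mem' := by simp
      add_mem' := by
        intro x y hx hy
        have hx' : ζ ^ (x:ℕ) = 1 := hx
        have hy' : ζ ^ (y:ℕ) = 1 := hy
        show ζ ^ ((x + y : Fin d):ℕ) = 1
        rw [Fin.val_add, pow_mod_eq d ζ hζ, pow_add, hx', hy', one_mul]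
      neg_mem' := by
        intro x hx
        have hx' : ζ ^ (x:ℕ) = 1 := hx
        show ζ ^ ((-x : Fin d):ℕ) = 1
        have h1 : ζ ^ ((x + (-x) : Fin d):ℕ) = 1 := by simp
        rw [Fin.val_add, pow_mod_eq d ζ hζ, pow_add, hx', one_mul] at h1
        exact h1 } with hK
  have hcard1 : Nat.card K = (Finset.univ.filter fun x : Fin d => ζ ^ (x:ℕ) = 1).card := by
    rw [Nat.card_eq_fintype_card]
    exact Fintype.card_subtype _
  have hcard2 : (Finset.univ.filter fun x : Fin d => ζ ^ (x:ℕ) = 1).card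
      = (Finset.univ.filter fun i : Fin d => ζ ^ (i:ℕ) = c).card := by
    apply Finset.card_bij (fun x _ => x + i0)
    · intro x hx
      rw [Finset.mem_filter] at hx ⊢
      refine ⟨Finset.mem_univ _, ?_⟩
      rw [Fin.val_add, pow_mod_eq d ζ hζ, pow_add, hx.2, one_mul, hc]
    · intro x hx y hy hxy
      exact add_right_cancel hxy
    · intro y hy
      rw [Finset.mem_filter] at hy
      refine ⟨y - i0, ?_, by simp⟩
      rw [Finset.mem_filter]
      refine ⟨Finset.mem_univ _, ?_⟩
      have h1 : ζ ^ ((y - i0 + i0 : Fin d):ℕ) = c := by rw [sub_add_cancel]; exact hy.2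
      rw [Fin.val_add, pow_mod_eq d ζ hζ, pow_add, hc] at h1
      field_simp at h1
      exact h1
  calc (Finset.univ.filter fun i : Fin d => ζ ^ (i:ℕ) = c).card
      = Nat.card K := by rw [hcard1, hcard2]
    _ ∣ Nat.card (Fin d) := AddSubgroup.card_addSubgroup_dvd_card K
    _ = d := by simp

lemma card_multiples_fin (d n e : ℕ) (he : 0 < e) (hn : 0 < n) (hde : d = n * e) :
    (Finset.univ.filter fun i : Fin d => e ∣ (i:ℕ)).card = n := by
  have himg : (Finset.univ.filter fun i : Fin d => e ∣ (i:ℕ))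
      = Finset.image (fun t : Fin n => (⟨(t:ℕ) * e, by
          subst hde; exact (Nat.mul_lt_mul_right he).mpr t.isLt⟩ : Fin d)) Finset.univ := by
    ext i
    simp only [Finset.mem_filter, Finset.mem_univ, true_and, Finset.mem_image]
    constructor
    · intro hdvd
      obtain ⟨t, ht⟩ := hdvd
      have h1 : e * t < e * n := by
        rw [← ht, mul_comm e n, ← hde]; exact i.isLt
      have htn : t < n := lt_of_mul_lt_mul_left h1 (Nat.zero_le e)
      exact ⟨⟨t, htn⟩, Fin.ext (by simp [ht, mul_comm])⟩
    · rintro ⟨t, rfl⟩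
      exact ⟨t, by simp [mul_comm]⟩
  rw [himg, Finset.card_image_of_injective _ (fun t t' h => by
    have : (t:ℕ) * e = (t':ℕ) * e := congrArg Fin.val h
    exact Fin.ext (Nat.eq_of_mul_eq_mul_right he this))]
  simp

lemma backward_construction (d n : ℕ) (hd : 2 ≤ d) (hn : 1 ≤ n) (hnd : 2 * n ≤ d)
    (hdvd : n ∣ d) :
    ∃ ψ : Fin d → ℂ,
      (Finset.univ.filter fun i => ψ i ≠ 0).card = d - n ∧
      (Finset.univ.filter fun j => dftCoeff d ψ j ≠ 0).card = 2 := by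
  classical
  obtain ⟨e, he⟩ := hdvd
  have hd0 : 0 < d := by omega
  have hω := dftOmega_ne_zero d
  have hs := sqrt_d_ne_zero d hd0
  have hd' : (d:ℂ) ≠ 0 := Nat.cast_ne_zero.mpr hd0.ne'
  have he0 : 0 < e := by nlinarith
  have hnltd : n < d := by omega
  set ψ : Fin d → ℂ := fun i => 1 - dftOmega d ^ ((i:ℕ) * n) with hψ
  -- zero set characterization
  have hzero : ∀ i : Fin d, ψ i = 0 ↔ e ∣ (i:ℕ) := by
    intro i
    rw [hψ]
    simp only [sub_eq_zero]
    rw [eq_comm, ← zpow_natCast (dftOmega d), dftOmega_zpow_eq_one_iff d hd0,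
      Int.natCast_dvd_natCast]
    constructor
    · intro h2
      obtain ⟨t, ht⟩ := h2
      have ht' : (i:ℕ) * n = n * e * t := by rw [← he]; exact ht
      have h3 : e * n ∣ (i:ℕ) * n := ⟨t, by rw [ht']; ring⟩
      exact (Nat.mul_dvd_mul_iff_right hn).mp h3
    · rintro ⟨t, ht⟩
      exact ⟨t, by rw [ht, he]; ring⟩
  haveI : NeZero d := ⟨hd0.ne'⟩
  refine ⟨ψ, ?_, ?_⟩
  · -- nA count
    have hcz : (Finset.univ.filter fun i : Fin d => ψ i = 0).card = n := by
      rw [Finset.filter_congr (fun i _ => by rw [hzero i] : ∀ i ∈ Finset.univ, ψ i = 0 ↔ e ∣ (i:ℕ))]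
      exact card_multiples_fin d n e he0 hn he
    have hsd : (Finset.univ.filter fun i : Fin d => ψ i ≠ 0)
        = Finset.univ \ (Finset.univ.filter fun i : Fin d => ψ i = 0) := by
      ext i
      simp
    rw [hsd, Finset.card_sdiff_of_subset (Finset.filter_subset _ _), hcz]
    simp
  · -- nB count
    set N : Fin d := ⟨n, hnltd⟩ with hN
    have hcoeff : ∀ j : Fin d, dftCoeff d ψ j =
        ((if (d:ℤ) ∣ -((j:ℕ):ℤ) then (d:ℂ) else 0)
          - (if (d:ℤ) ∣ ((n:ℤ) - ((j:ℕ):ℤ)) then (d:ℂ) else 0)) / Real.sqrt d := by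
      intro j
      rw [dftCoeff]
      have hterm : ∀ i : Fin d, (starRingEnd ℂ) (fourierVec d j i) * ψ i
          = ((dftOmega d ^ (-((j:ℕ):ℤ))) ^ (i:ℕ)
            - (dftOmega d ^ ((n:ℤ) - ((j:ℕ):ℤ))) ^ (i:ℕ)) / Real.sqrt d := by
        intro i
        rw [conj_fourierVec]
        have h1 : (dftOmega d ^ (-((j:ℕ):ℤ))) ^ (i:ℕ)
            = (dftOmega d ^ ((i:ℕ) * (j:ℕ)))⁻¹ := by
          rw [← zpow_natCast (dftOmega d ^ (-((j:ℕ):ℤ))), ← zpow_mul,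
            ← zpow_natCast (dftOmega d) ((i:ℕ) * (j:ℕ)), ← zpow_neg]
          congr 1
          push_cast
          ring
        have h2 : (dftOmega d ^ ((n:ℤ) - ((j:ℕ):ℤ))) ^ (i:ℕ)
            = dftOmega d ^ ((i:ℕ) * n) * (dftOmega d ^ ((i:ℕ) * (j:ℕ)))⁻¹ := by
          rw [← zpow_natCast (dftOmega d ^ ((n:ℤ) - ((j:ℕ):ℤ))), ← zpow_mul, sub_mul,
            zpow_sub₀ hω, div_eq_mul_inv, mul_comm ((n:ℤ)) ((i:ℕ):ℤ),
            mul_comm (((j:ℕ):ℤ)) ((i:ℕ):ℤ)]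
          norm_cast
        rw [h1, h2, hψ]
        ring
      rw [Finset.sum_congr rfl (fun i _ => hterm i), ← Finset.sum_div,
        Finset.sum_sub_distrib, sum_dftOmega_zpow d hd0, sum_dftOmega_zpow d hd0]
    have hcond1 : ∀ j : Fin d, ((d:ℤ) ∣ -((j:ℕ):ℤ)) ↔ j = 0 := by
      intro j
      rw [dvd_neg]
      have h := int_dvd_sub_iff_nat d (j:ℕ) 0 j.isLt hd0
      simp only [Nat.cast_zero, sub_zero] at h
      rw [h, Fin.ext_iff, Fin.val_zero]
    have hcond2 : ∀ j : Fin d, ((d:ℤ) ∣ ((n:ℤ) - ((j:ℕ):ℤ))) ↔ j = N := by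
      intro j
      rw [int_dvd_sub_iff_nat d n (j:ℕ) hnltd j.isLt, Fin.ext_iff, hN]
      simp [eq_comm]
    have hZN : (0 : Fin d) ≠ N := by
      intro h
      have h2 := congrArg Fin.val h
      simp [hN] at h2
      omega
    have hfilter : (Finset.univ.filter fun j : Fin d => dftCoeff d ψ j ≠ 0)
        = {(0 : Fin d), N} := by
      ext j
      simp only [Finset.mem_filter, Finset.mem_univ, true_and, Finset.mem_insert,
        Finset.mem_singleton, hcoeff j]
      rw [div_ne_zero_iff]
      constructor
      · rintro ⟨hne, -⟩
        by_contra hcon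
        push_neg at hcon
        rw [if_neg (fun h => hcon.1 ((hcond1 j).mp h)),
          if_neg (fun h => hcon.2 ((hcond2 j).mp h)), sub_zero] at hne
        exact hne rfl
      · intro hor
        refine ⟨?_, hs⟩
        rcases hor with h0 | hN'
        · rw [if_pos ((hcond1 j).mpr h0),
            if_neg (fun h => hZN (h0.symm.trans ((hcond2 j).mp h))), sub_zero]
          exact hd'
        · rw [if_neg (fun h => hZN (((hcond1 j).mp h).symm.trans hN')),
            if_pos ((hcond2 j).mpr hN'), zero_sub, neg_ne_zero]
          exact hd'
    rw [hfilter, Finset.card_insert_of_notMem (by simpa using hZN), Finset.card_singleton]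

/-- Theorem 2: for `1 ≤ n ≤ d/2`, the point `(d−n, 2)` belongs to the uncertainty
diagram of the DFT if and only if `n ∣ d`. -/
theorem hole_characterization_nB_two (d n : ℕ) (hd : 2 ≤ d)
    (hn : 1 ≤ n) (hnd : 2 * n ≤ d) :
    (∃ ψ : Fin d → ℂ, ψ ≠ 0 ∧ nA d ψ = d - n ∧ nB d ψ = 2) ↔ n ∣ d := by
  classical
  have hd0 : 0 < d := by omega
  have hω := dftOmega_ne_zero d
  have hs := sqrt_d_ne_zero d hd0
  constructor
  · rintro ⟨ψ, hψ0, hA, hB⟩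
    rw [nB] at hB
    rw [nA] at hA
    obtain ⟨j, k, hjk, hS⟩ := Finset.card_eq_two.mp hB
    have hj : dftCoeff d ψ j ≠ 0 := by
      have hm : j ∈ Finset.univ.filter (fun j' => dftCoeff d ψ j' ≠ 0) :=
        hS ▸ Finset.mem_insert_self j {k}
      exact (Finset.mem_filter.mp hm).2
    have hk : dftCoeff d ψ k ≠ 0 := by
      have hm : k ∈ Finset.univ.filter (fun j' => dftCoeff d ψ j' ≠ 0) := by
        rw [hS]; exact Finset.mem_insert_of_mem (Finset.mem_singleton_self k)
      exact (Finset.mem_filter.mp hm).2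
    set a := dftCoeff d ψ j with hadef
    set b := dftCoeff d ψ k with hbdef
    have hrep : ∀ i, ψ i = a * fourierVec d j i + b * fourierVec d k i := by
      intro i
      have hsplit : ∑ j', dftCoeff d ψ j' * fourierVec d j' i
          = ∑ j' ∈ (Finset.univ.filter fun j' => dftCoeff d ψ j' ≠ 0),
              dftCoeff d ψ j' * fourierVec d j' i := by
        symm
        apply Finset.sum_subset (Finset.subset_univ _)
        intro x _ hx
        simp only [Finset.mem_filter, Finset.mem_univ, true_and, not_not] at hx
        rw [hx, zero_mul]
      rw [← dft_inversion d hd0 ψ i, hsplit, hS,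
        Finset.sum_insert (by simp [hjk]), Finset.sum_singleton]
    set ζ := dftOmega d ^ (j:ℕ) / dftOmega d ^ (k:ℕ) with hζdef
    have hζd : ζ ^ d = 1 := by
      rw [hζdef, div_pow, ← pow_mul, ← pow_mul, mul_comm (j:ℕ) d, mul_comm (k:ℕ) d,
        pow_mul, pow_mul, dftOmega_pow_self d hd0, one_pow, one_pow, div_one]
    have hiff : ∀ i : Fin d, ψ i = 0 ↔ ζ ^ (i:ℕ) = -b / a := by
      intro i
      have hx : dftOmega d ^ ((i:ℕ) * (j:ℕ)) ≠ 0 := pow_ne_zero _ hω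
      have hy : dftOmega d ^ ((i:ℕ) * (k:ℕ)) ≠ 0 := pow_ne_zero _ hω
      rw [hrep i, fourierVec, fourierVec, hζdef, div_pow, ← pow_mul, ← pow_mul,
        mul_comm (j:ℕ) (i:ℕ), mul_comm (k:ℕ) (i:ℕ)]
      constructor
      · intro h
        have h' : a * dftOmega d ^ ((i:ℕ) * (j:ℕ)) + b * dftOmega d ^ ((i:ℕ) * (k:ℕ)) = 0 := by
          field_simp at h
          linear_combination h
        rw [div_eq_div_iff hy hj]
        linear_combination h'
      · intro h
        rw [div_eq_div_iff hy hj] at h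
        field_simp
        linear_combination h
    have hZeq : (Finset.univ.filter fun i => ψ i = 0)
        = (Finset.univ.filter fun i : Fin d => ζ ^ (i:ℕ) = -b / a) :=
      Finset.filter_congr (fun i _ => hiff i)
    have hAz : (Finset.univ.filter fun i : Fin d => ψ i = 0).card = n := by
      have hsd : (Finset.univ.filter fun i : Fin d => ψ i = 0)
          = Finset.univ \ (Finset.univ.filter fun i : Fin d => ψ i ≠ 0) := by
        ext i
        simp [not_not]
      rw [hsd, Finset.card_sdiff_of_subset (Finset.filter_subset _ _), hA]
      simp
      omega
    rw [hZeq] at hAz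
    have hnonempty : (Finset.univ.filter fun i : Fin d => ζ ^ (i:ℕ) = -b / a).Nonempty := by
      rw [← Finset.card_pos, hAz]
      omega
    have hdvd := fiber_card_dvd d hd0 ζ (-b / a) hζd hnonempty
    rwa [hAz] at hdvd
  · intro hdvd
    obtain ⟨ψ, h1, h2⟩ := backward_construction d n hd hn hnd hdvd
    refine ⟨ψ, ?_, h1, h2⟩
    have hpos : 0 < (Finset.univ.filter fun i => ψ i ≠ 0).card := by
      rw [h1]; omega
    obtain ⟨i, hi⟩ := Finset.card_pos.mp hpos
    intro hcon
    rw [Finset.mem_filter, hcon] at hi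
    simp at hi
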